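/- arXiv:2207.06863 — 2 statements merged into one kernel-verified Lean document; each statement's English description precedes it below -/
import Mathlib

section
/- On a locally conformally Kähler manifold, for any 1-form ζ, the symmetrized covariant derivative satisfies δ*ζ = ∇(ζ^♯) − (1/2)(· ⌟ d_θ ζ)^♯ + (1/2) g(ζ, θ) Id, where δ* is the adjoint of the Riemannian divergence on symmetric endomorphisms and ∇ is the Weyl connection. -/
/-!
We formalize locally conformally symplectic/Kähler geometry in the standard
algebraic way: smooth real-valued functions on a smooth manifold `M` form the
commutative ring `Sm n M`, vector fields are derivations `VF n M` (with their
Lie bracket), differential forms are alternating `Sm n M`-multilinear maps on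
vector fields, and the exterior differential, Lie derivative, interior product,
connections, etc. are given by the usual Koszul-type formulas.
-/

open scoped Manifold
open Finset

set_option maxHeartbeats 2000000

/-- Smooth real-valued functions on `M`. -/
abbrev Sm (n : ℕ) (M : Type*) [TopologicalSpace M]
    [ChartedSpace (EuclideanSpace ℝ (Fin n)) M] : Type _ :=
  ContMDiffMap (𝓡 n) 𝓘(ℝ, ℝ) M ℝ (⊤ : ℕ∞)

/-- Vector fields on `M`, viewed as derivations of the ring of smooth functions. -/
abbrev VF (n : ℕ) (M : Type*) [TopologicalSpace M]
    [ChartedSpace (EuclideanSpace ℝ (Fin n)) M] : Type _ :=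
  Derivation ℝ (Sm n M) (Sm n M)

noncomputable section

variable {n : ℕ} {M : Type*} [TopologicalSpace M]
  [ChartedSpace (EuclideanSpace ℝ (Fin n)) M]
  [IsManifold (𝓡 n) (⊤ : ℕ∞) M]

/-- Differential of a function, `(df)(X) = X f`. -/
def d0 (f : Sm n M) : VF n M → Sm n M := fun X => X f

/-- Exterior differential of a 1-form (Koszul formula). -/
def d1 (θ : VF n M → Sm n M) : VF n M → VF n M → Sm n M :=
  fun X Y => X (θ Y) - Y (θ X) - θ ⁅X, Y⁆

/-- Exterior differential of a 2-form (Koszul formula). -/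
def d2 (ω : VF n M → VF n M → Sm n M) : VF n M → VF n M → VF n M → Sm n M :=
  fun X Y Z =>
    X (ω Y Z) - Y (ω X Z) + Z (ω X Y) - ω ⁅X, Y⁆ Z + ω ⁅X, Z⁆ Y - ω ⁅Y, Z⁆ X

/-- Wedge product of two 1-forms. -/
def wedge11 (θ α : VF n M → Sm n M) : VF n M → VF n M → Sm n M :=
  fun X Y => θ X * α Y - θ Y * α X

/-- Wedge product of a 1-form and a 2-form. -/
def wedge12 (θ : VF n M → Sm n M) (ω : VF n M → VF n M → Sm n M) :
    VF n M → VF n M → VF n M → Sm n M :=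
  fun X Y Z => θ X * ω Y Z - θ Y * ω X Z + θ Z * ω X Y

/-- Twisted differential `d_θ f = df - f θ` on functions. -/
def dTheta0 (θ : VF n M → Sm n M) (f : Sm n M) : VF n M → Sm n M :=
  fun X => X f - f * θ X

/-- Twisted differential `d_θ α = dα - θ ∧ α` on 1-forms. -/
def dTheta1 (θ α : VF n M → Sm n M) : VF n M → VF n M → Sm n M :=
  fun X Y => d1 α X Y - wedge11 θ α X Y

/-- Twisted differential `d_θ ω = dω - θ ∧ ω` on 2-forms. -/
def dTheta2 (θ : VF n M → Sm n M) (ω : VF n M → VF n M → Sm n M) :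
    VF n M → VF n M → VF n M → Sm n M :=
  fun X Y Z => d2 ω X Y Z - wedge12 θ ω X Y Z

/-- Lie derivative of a 2-form along a vector field. -/
def lieDeriv2 (X : VF n M) (ω : VF n M → VF n M → Sm n M) :
    VF n M → VF n M → Sm n M :=
  fun Y Z => X (ω Y Z) - ω ⁅X, Y⁆ Z - ω Y ⁅X, Z⁆

/-- Interior product `X ⌟ ω` of a vector field with a 2-form. -/
def iota (X : VF n M) (ω : VF n M → VF n M → Sm n M) : VF n M → Sm n M :=
  fun Y => ω X Y

/-- A 1-form: an additive, `C^∞`-homogeneous map on vector fields. -/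
def IsOneForm (θ : VF n M → Sm n M) : Prop :=
  (∀ X Y : VF n M, θ (X + Y) = θ X + θ Y) ∧
    ∀ (f : Sm n M) (X : VF n M), θ (f • X) = f * θ X

/-- A 2-form: alternating, additive and `C^∞`-homogeneous. -/
def IsTwoForm (ω : VF n M → VF n M → Sm n M) : Prop :=
  (∀ X Y : VF n M, ω X Y = - ω Y X) ∧
    (∀ X X' Y : VF n M, ω (X + X') Y = ω X Y + ω X' Y) ∧
    ∀ (f : Sm n M) (X Y : VF n M), ω (f • X) Y = f * ω X Y

/-- Locally conformally symplectic structure: `ω` a nondegenerate 2-form, `θ` a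
closed 1-form (the Lee form), with `dω = θ ∧ ω`. -/
def IsLCS (ω : VF n M → VF n M → Sm n M) (θ : VF n M → Sm n M) : Prop :=
  IsTwoForm ω ∧ IsOneForm θ ∧ (∀ X : VF n M, (∀ Y : VF n M, ω X Y = 0) → X = 0) ∧
    (∀ X Y : VF n M, d1 θ X Y = 0) ∧
    ∀ X Y Z : VF n M, d2 ω X Y Z = wedge12 θ ω X Y Z

/-- A Riemannian metric: symmetric, additive, `C^∞`-homogeneous, pointwise
nonnegative on the diagonal, and nondegenerate. -/
def IsMetric (g : VF n M → VF n M → Sm n M) : Prop :=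
  (∀ X Y : VF n M, g X Y = g Y X) ∧
    (∀ X X' Y : VF n M, g (X + X') Y = g X Y + g X' Y) ∧
    (∀ (f : Sm n M) (X Y : VF n M), g (f • X) Y = f * g X Y) ∧
    (∀ (X : VF n M) (x : M), 0 ≤ g X X x) ∧
    ∀ X : VF n M, (∀ Y : VF n M, g X Y = 0) → X = 0

/-- A linear connection on vector fields. -/
def IsConnection (D : VF n M → VF n M → VF n M) : Prop :=
  (∀ X X' Y : VF n M, D (X + X') Y = D X Y + D X' Y) ∧
    (∀ (f : Sm n M) (X Y : VF n M), D (f • X) Y = f • D X Y) ∧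
    (∀ X Y Y' : VF n M, D X (Y + Y') = D X Y + D X Y') ∧
    ∀ (f : Sm n M) (X Y : VF n M), D X (f • Y) = (X f) • Y + f • D X Y

/-- The Levi-Civita connection of `g`: the torsion-free metric connection. -/
def IsLeviCivita (g : VF n M → VF n M → Sm n M) (D : VF n M → VF n M → VF n M) : Prop :=
  IsConnection D ∧ (∀ X Y : VF n M, D X Y - D Y X = ⁅X, Y⁆) ∧
    ∀ X Y Z : VF n M, X (g Y Z) = g (D X Y) Z + g Y (D X Z)

/-- An almost complex structure on vector fields. -/
def IsAlmostComplex (J : VF n M → VF n M) : Prop :=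
  (∀ X Y : VF n M, J (X + Y) = J X + J Y) ∧
    (∀ (f : Sm n M) (X : VF n M), J (f • X) = f • J X) ∧
    ∀ X : VF n M, J (J X) = -X

/-- Integrability of `J`: vanishing of the Nijenhuis tensor. -/
def IsIntegrable (J : VF n M → VF n M) : Prop :=
  ∀ X Y : VF n M, ⁅J X, J Y⁆ - ⁅X, Y⁆ - J ⁅J X, Y⁆ - J ⁅X, J Y⁆ = 0

/-- A locally conformally Kähler structure `(g, J)` with Lee form `θ`: `g` a
`J`-Hermitian metric, `J` integrable, `θ` closed, and `dω = θ ∧ ω` where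
`ω = g(J·,·)` is the fundamental 2-form. -/
def IsLcK (g : VF n M → VF n M → Sm n M) (J : VF n M → VF n M)
    (θ : VF n M → Sm n M) : Prop :=
  IsMetric g ∧ IsAlmostComplex J ∧ IsIntegrable J ∧ IsOneForm θ ∧
    (∀ X Y : VF n M, g (J X) (J Y) = g X Y) ∧ (∀ X Y : VF n M, d1 θ X Y = 0) ∧
    ∀ X Y Z : VF n M,
      d2 (fun X Y => g (J X) Y) X Y Z = wedge12 θ (fun X Y => g (J X) Y) X Y Z

/-- Lie derivative of `J` along `X`, as an endomorphism of vector fields. -/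
def lieDerivJ (X : VF n M) (J : VF n M → VF n M) : VF n M → VF n M :=
  fun Y => ⁅X, J Y⁆ - J ⁅X, Y⁆


/-- Special conformal vector field: `d_θ(X ⌟ ω) = 0`. -/
def SpecConf (ω : VF n M → VF n M → Sm n M) (θ : VF n M → Sm n M) (X : VF n M) : Prop :=
  ∀ Y Z : VF n M, dTheta1 θ (iota X ω) Y Z = 0

/-- Twisted-Hamiltonian vector field: `X ⌟ ω` is `d_θ`-exact. -/
def TwHam (ω : VF n M → VF n M → Sm n M) (θ : VF n M → Sm n M) (X : VF n M) : Prop :=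
  ∃ h : Sm n M, ∀ Y : VF n M, ω X Y = dTheta0 θ h Y


/-- On a locally conformally Kähler manifold, for any 1-form `ζ`,
`δ*ζ = ∇(ζ^♯) − (1/2)(· ⌟ d_θ ζ)^♯ + (1/2) g(ζ,θ) Id`, where `δ*` is the adjoint
of the Riemannian divergence, given in a local orthonormal frame `(e_α)` by
`(δ*ζ)(Y) = (1/2) Σ_α (g(D_Y ζ^♯, e_α) + g(D_{e_α} ζ^♯, Y)) e_α`, and `∇` is the
Weyl connection. The vector field `s Y` is `(Y ⌟ d_θ ζ)^♯`. -/
theorem deltaStar_eq_weyl_formula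
    (g : VF n M → VF n M → Sm n M) (J : VF n M → VF n M) (θ ζ : VF n M → Sm n M)
    (θs ζs : VF n M) (D W : VF n M → VF n M → VF n M) (s : VF n M → VF n M)
    (N : ℕ) (e : Fin N → VF n M)
    (hlck : IsLcK g J θ) (hD : IsLeviCivita g D)
    (hθs : ∀ Y : VF n M, g θs Y = θ Y)
    (hζ : IsOneForm ζ) (hζs : ∀ Y : VF n M, g ζs Y = ζ Y)
    (hW : ∀ X Y : VF n M,
      W X Y = D X Y - ((1:ℝ)/2) • (θ X • Y + θ Y • X - g X Y • θs))
    (hs : ∀ Y Z : VF n M, g (s Y) Z = dTheta1 θ ζ Y Z)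
    (horth : ∀ α β : Fin N, g (e α) (e β) = if α = β then 1 else 0)
    (hframe : ∀ X : VF n M, X = ∑ α, g X (e α) • e α) :
    ∀ Y : VF n M,
      (∑ α, ((1:ℝ)/2) • ((g (D Y ζs) (e α) + g (D (e α) ζs) Y) • e α)) =
        W Y ζs - ((1:ℝ)/2) • s Y + ((1:ℝ)/2) • (g ζs θs • Y) := by
    intro Y
    obtain ⟨hgM, hAC, hInt, hθ1, hHerm, hθcl, hdω⟩ := hlck
    obtain ⟨gsymm, gadd, gsmul, gpos, gnd⟩ := hgM
    obtain ⟨hDconn, hDtor, hDmet⟩ := hD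
    -- additive hom in the first argument
    have gsub : ∀ X X' Z : VF n M, g (X - X') Z = g X Z - g X' Z := fun X X' Z =>
      map_sub (AddMonoidHom.mk' (fun X => g X Z) (fun a b => gadd a b Z)) X X'
    have gsum : ∀ (v : Fin N → VF n M) (Z : VF n M),
        g (∑ α, v α) Z = ∑ α, g (v α) Z := fun v Z =>
      map_sum (AddMonoidHom.mk' (fun X => g X Z) (fun a b => gadd a b Z)) v Finset.univ
    have gsmulR : ∀ (r : ℝ) (X Z : VF n M), g (r • X) Z = r • g X Z := by
      intro r X Z
      rw [← algebraMap_smul (Sm n M) r X, gsmul, ← Algebra.smul_def]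
    set A : Sm n M := algebraMap ℝ (Sm n M) ((1:ℝ)/2) with hAdef
    have hA : A + A = 1 := by
      rw [hAdef, ← map_add, show (1:ℝ)/2 + 1/2 = 1 by norm_num, map_one]
    have smulA : ∀ c : Sm n M, ((1:ℝ)/2) • c = A * c := by
      intro c; rw [hAdef]; exact Algebra.smul_def _ _
    have resum : ∀ X Z : VF n M, (∑ α, g X (e α) * g (e α) Z) = g X Z := by
      intro X Z
      conv_rhs => rw [hframe X]
      rw [gsum]
      exact Finset.sum_congr rfl fun α _ => (gsmul _ _ _).symm
    have keyζ : ∀ X V : VF n M, g (D X ζs) V = X (g ζs V) - g ζs (D X V) := by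
      intro X V
      have h := hDmet X ζs V
      linear_combination -h
    have tor : ∀ X V : VF n M, g ζs (D X V) - g ζs (D V X) = g ζs ⁅X, V⁆ :=
      fun X V =>
        calc g ζs (D X V) - g ζs (D V X)
            = g (D X V) ζs - g (D V X) ζs := by rw [gsymm ζs (D X V), gsymm ζs (D V X)]
          _ = g (D X V - D V X) ζs := (gsub _ _ _).symm
          _ = g ⁅X, V⁆ ζs := by rw [hDtor]
          _ = g ζs ⁅X, V⁆ := gsymm _ _
    have hd1 : ∀ α : Fin N,
        g (D Y ζs) (e α) - g (D (e α) ζs) Y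
          = g (s Y) (e α) + θ Y * g ζs (e α) - g ζs Y * θ (e α) := by
      intro α
      have h1 := keyζ Y (e α)
      have h2 := keyζ (e α) Y
      have h3 := hs Y (e α)
      simp only [dTheta1, d1, wedge11] at h3
      rw [← hζs (e α), ← hζs Y, ← hζs ⁅Y, e α⁆] at h3
      have h4 := tor Y (e α)
      linear_combination h1 - h2 - h3 - h4
    have main : ∀ Z : VF n M,
        g ((∑ α, ((1:ℝ)/2) • ((g (D Y ζs) (e α) + g (D (e α) ζs) Y) • e α))
          - (W Y ζs - ((1:ℝ)/2) • s Y + ((1:ℝ)/2) • (g ζs θs • Y))) Z = 0 := by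
      intro Z
      rw [gsub]
      have hL : g (∑ α, ((1:ℝ)/2) • ((g (D Y ζs) (e α) + g (D (e α) ζs) Y) • e α)) Z
          = g (D Y ζs) Z - A * (g (s Y) Z + θ Y * g ζs Z - g ζs Y * g θs Z) := by
        rw [gsum]
        have hterm : ∀ α ∈ Finset.univ,
            g (((1:ℝ)/2) • ((g (D Y ζs) (e α) + g (D (e α) ζs) Y) • e α)) Z
              = g (D Y ζs) (e α) * g (e α) Z
                - A * (g (s Y) (e α) * g (e α) Z + θ Y * (g ζs (e α) * g (e α) Z)
                    - g ζs Y * (g θs (e α) * g (e α) Z)) := by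
          intro α _
          rw [gsmulR, smulA, gsmul]
          linear_combination (-(A * g (e α) Z)) * hd1 α
            + (g (D Y ζs) (e α) * g (e α) Z) * hA
            - (A * g ζs Y * g (e α) Z) * hθs (e α)
        set_option maxHeartbeats 1000000 in
        rw [Finset.sum_congr rfl hterm, Finset.sum_sub_distrib, ← Finset.mul_sum,
          Finset.sum_sub_distrib, Finset.sum_add_distrib, ← Finset.mul_sum, ← Finset.mul_sum,
          resum, resum, resum, resum]
      have hR : g (W Y ζs - ((1:ℝ)/2) • s Y + ((1:ℝ)/2) • (g ζs θs • Y)) Z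
          = g (D Y ζs) Z - A * (g (s Y) Z + θ Y * g ζs Z - g ζs Y * g θs Z) := by
        rw [hW Y ζs]
        simp only [gadd, gsub, gsmulR, gsmul, smulA]
        linear_combination (A * g Y Z) * hθs ζs + (A * g Y Z) * gsymm ζs θs
          + (A * g θs Z) * gsymm Y ζs
      rw [hL, hR, sub_self]
    have := gnd _ main
    exact sub_eq_zero.mp this

end
end

section
/- On a locally conformally symplectic manifold, the special conformal vector fields aut*(M,[ω]) = {X : d_θ(X ⌟ ω) = 0} form a Lie subalgebra of vector fields, the twisted-Hamiltonian vector fields ham(M,[ω]) = {X : X ⌟ ω is d_θ-exact} form a Lie subalgebra, and [aut*(M,[ω]), aut*(M,[ω])] ⊆ ham(M,[ω]). -/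
/-!
We formalize locally conformally symplectic/Kähler geometry in the standard
algebraic way: smooth real-valued functions on a smooth manifold `M` form the
commutative ring `Sm n M`, vector fields are derivations `VF n M` (with their
Lie bracket), differential forms are alternating `Sm n M`-multilinear maps on
vector fields, and the exterior differential, Lie derivative, interior product,
connections, etc. are given by the usual Koszul-type formulas.
-/

open scoped Manifold
open Finset

noncomputable section

variable {n : ℕ} {M : Type*} [TopologicalSpace M]
  [ChartedSpace (EuclideanSpace ℝ (Fin n)) M]
  [IsManifold (𝓡 n) (⊤ : ℕ∞) M]

section Aux
set_option linter.unusedSectionVars false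

variable {n : ℕ} {M : Type*} [TopologicalSpace M]
  [ChartedSpace (EuclideanSpace ℝ (Fin n)) M]
  [IsManifold (𝓡 n) (⊤ : ℕ∞) M]

lemma rsmul_eq_algebraMap_smul (r : ℝ) (X : VF n M) :
    r • X = (algebraMap ℝ (Sm n M) r) • X := by
  ext f
  simp [Algebra.smul_def]

/-- Every twisted-Hamiltonian field is special conformal (uses `dθ = 0`). -/
lemma twHam_specConf' {ω : VF n M → VF n M → Sm n M} {θ : VF n M → Sm n M}
    (hθ : ∀ X Y : VF n M, d1 θ X Y = 0) {X : VF n M}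
    (hX : TwHam ω θ X) : SpecConf ω θ X := by
  obtain ⟨h, hh⟩ := hX
  intro Y Z
  have hc := hθ Y Z
  unfold d1 at hc
  have hbr : (⁅Y, Z⁆ : VF n M) h = Y (Z h) - Z (Y h) := Derivation.commutator_apply ..
  unfold dTheta1 d1 wedge11 iota
  rw [hh Y, hh Z, hh ⁅Y, Z⁆]
  unfold dTheta0
  rw [hbr]
  have l1 : Y (Z h - h * θ Z) = Y (Z h) - (h * Y (θ Z) + θ Z * Y h) := by
    rw [map_sub, Derivation.leibniz]; simp [smul_eq_mul]
  have l2 : Z (Y h - h * θ Y) = Z (Y h) - (h * Z (θ Y) + θ Y * Z h) := by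
    rw [map_sub, Derivation.leibniz]; simp [smul_eq_mul]
  rw [l1, l2]
  linear_combination (-h) * hc

end Aux

/-- On a locally conformally symplectic manifold, the special
conformal vector fields form a Lie subalgebra of vector fields, the
twisted-Hamiltonian vector fields form a Lie subalgebra, and
`[aut*(M,[ω]), aut*(M,[ω])] ⊆ ham(M,[ω])`. -/
theorem specConf_twHam_lie_subalgebras
    (ω : VF n M → VF n M → Sm n M) (θ : VF n M → Sm n M) (h : IsLCS ω θ) :
    (∀ X Y : VF n M, SpecConf ω θ X → SpecConf ω θ Y → SpecConf ω θ (X + Y)) ∧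
      (∀ (r : ℝ) (X : VF n M), SpecConf ω θ X → SpecConf ω θ (r • X)) ∧
      (∀ X Y : VF n M, SpecConf ω θ X → SpecConf ω θ Y → SpecConf ω θ ⁅X, Y⁆) ∧
      (∀ X Y : VF n M, TwHam ω θ X → TwHam ω θ Y → TwHam ω θ (X + Y)) ∧
      (∀ (r : ℝ) (X : VF n M), TwHam ω θ X → TwHam ω θ (r • X)) ∧
      (∀ X Y : VF n M, TwHam ω θ X → TwHam ω θ Y → TwHam ω θ ⁅X, Y⁆) ∧
      ∀ X Y : VF n M, SpecConf ω θ X → SpecConf ω θ Y → TwHam ω θ ⁅X, Y⁆ := by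
  obtain ⟨⟨hanti, haddl, hhoml⟩, ⟨θadd, θhom⟩, hnd, hθ, hd2⟩ := h
  -- additivity of ω in the second argument, from antisymmetry + first-arg additivity
  have haddr : ∀ X Y Y' : VF n M, ω X (Y + Y') = ω X Y + ω X Y' := by
    intro X Y Y'
    rw [hanti, haddl, hanti Y X, hanti Y' X]; ring
  have hhomr : ∀ (f : Sm n M) (X Y : VF n M), ω X (f • Y) = f * ω X Y := by
    intro f X Y
    rw [hanti, hhoml, hanti Y X]; ring
  -- key: special conformal X, Y ⇒ ⁅X,Y⁆ is twisted Hamiltonian with h = -(ω X Y)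
  have key : ∀ X Y : VF n M, SpecConf ω θ X → SpecConf ω θ Y → TwHam ω θ ⁅X, Y⁆ := by
    intro X Y hX hY
    refine ⟨-(ω X Y), fun Z => ?_⟩
    have hA := hX Y Z
    have hB := hY X Z
    have hL := hd2 X Y Z
    unfold dTheta1 d1 wedge11 iota at hA hB
    unfold d2 wedge12 at hL
    rw [hanti Y X, map_neg] at hB
    rw [hanti ⁅X,Z⁆ Y, hanti ⁅Y,Z⁆ X] at hL
    unfold dTheta0
    rw [map_neg]
    linear_combination -hL + hB - hA
  constructor
  · -- SpecConf additive
    intro X Y hX hY A B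
    have hX' := hX A B
    have hY' := hY A B
    unfold dTheta1 d1 wedge11 iota at *
    rw [haddl, haddl, haddl, map_add, map_add] at *
    linear_combination hX' + hY'
  refine ⟨?_, ?_, ?_, ?_, ?_, key⟩
  · -- SpecConf smul
    intro r X hX A B
    have hX' := hX A B
    unfold dTheta1 d1 wedge11 iota at *
    rw [rsmul_eq_algebraMap_smul, hhoml, hhoml, hhoml] at *
    rw [Derivation.leibniz, Derivation.leibniz] at *
    simp only [smul_eq_mul, Derivation.map_algebraMap] at *
    linear_combination (algebraMap ℝ (Sm n M) r) * hX'
  · -- SpecConf bracket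
    intro X Y hX hY
    exact twHam_specConf' hθ (key X Y hX hY)
  · -- TwHam additive
    rintro X Y ⟨f, hf⟩ ⟨g, hg⟩
    refine ⟨f + g, fun Z => ?_⟩
    rw [haddl, hf, hg]
    unfold dTheta0
    rw [map_add]; ring
  · -- TwHam smul
    rintro r X ⟨f, hf⟩
    refine ⟨(algebraMap ℝ (Sm n M) r) * f, fun Z => ?_⟩
    rw [rsmul_eq_algebraMap_smul, hhoml, hf]
    unfold dTheta0
    rw [Derivation.leibniz]
    simp only [smul_eq_mul, Derivation.map_algebraMap]
    ring
  · -- TwHam bracket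
    rintro X Y hX hY
    exact key X Y (twHam_specConf' hθ hX) (twHam_specConf' hθ hY)

end
end
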